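/- In a chain of n triangles with unit bottom-edge weights and detour lengths 1 + η_i, increasing the published weight of bottom edge {u_{i-1},u_i} from 1 to 1 + η_i for exactly the indices i ∈ S makes the minimum attack cost equal to ∑_{i∈S} ν_i and increases the shortest published s–t distance by exactly ∑_{i∈S} η_i. -/

import Mathlib

open SimpleGraph

/-- Length of a walk with respect to edge weights `w`. -/
noncomputable def walkLen {V : Type*} {G : SimpleGraph V} (w : Sym2 V → ℝ) {s t : V}
    (p : G.Walk s t) : ℝ := (p.edges.map w).sum

/-- Vertices of the chain-of-triangles gadget: `Sum.inl i` is `u_i`, `Sum.inr i` is `ω_{i+1}`. -/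
abbrev CV (n : ℕ) := Fin (n + 1) ⊕ Fin n

/-- The bottom edge `{u_{i-1}, u_i}` of the `i`-th triangle (on the target path). -/
def botE (n : ℕ) (i : Fin n) : Sym2 (CV n) := s(Sum.inl i.castSucc, Sum.inl i.succ)

/-- The detour edge `{u_{i-1}, ω_i}` of the `i`-th triangle. -/
def d1E (n : ℕ) (i : Fin n) : Sym2 (CV n) := s(Sum.inl i.castSucc, Sum.inr i)

/-- The detour edge `{ω_i, u_i}` of the `i`-th triangle. -/
def d2E (n : ℕ) (i : Fin n) : Sym2 (CV n) := s(Sum.inr i, Sum.inl i.succ)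

/-- The chain-of-triangles gadget graph. -/
def chainGraph (n : ℕ) : SimpleGraph (CV n) :=
  SimpleGraph.fromEdgeSet {e | ∃ i : Fin n, e = botE n i ∨ e = d1E n i ∨ e = d2E n i}

/-- Source `s = u_0`. -/
def src (n : ℕ) : CV n := Sum.inl 0

/-- Destination `t = u_n`. -/
def dst (n : ℕ) : CV n := Sum.inl (Fin.last n)

/-- An attack on the chain gadget: removable edges lie in the graph, no bottom edge
(edge of `p*`) is removed, and afterwards every simple `s`–`t` path other than the bottom
path `p*` (i.e. any path visiting some detour vertex `ω_i`) is strictly longer than `p*`. -/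
def IsChainAttack (n : ℕ) (w' : Sym2 (CV n) → ℝ) (E' : Finset (Sym2 (CV n))) : Prop :=
  ↑E' ⊆ (chainGraph n).edgeSet ∧ (∀ i : Fin n, botE n i ∉ E') ∧
    ∀ q : ((chainGraph n).deleteEdges ↑E').Walk (src n) (dst n), q.IsPath →
      (∃ i : Fin n, Sum.inr i ∈ q.support) →
      ∑ i : Fin n, w' (botE n i) < walkLen w' q


section Aux

variable {n : ℕ}

lemma walkLen_nil {V : Type*} {G : SimpleGraph V} (w : Sym2 V → ℝ) {a : V} :
    walkLen w (SimpleGraph.Walk.nil : G.Walk a a) = 0 := by simp [walkLen]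

lemma walkLen_cons {V : Type*} {G : SimpleGraph V} (w : Sym2 V → ℝ) {a b c : V}
    (h : G.Adj a b) (p : G.Walk b c) :
    walkLen w (SimpleGraph.Walk.cons h p) = w s(a, b) + walkLen w p := by
  simp [walkLen]

lemma walkLen_append {V : Type*} {G : SimpleGraph V} (w : Sym2 V → ℝ) {a b c : V}
    (p : G.Walk a b) (q : G.Walk b c) :
    walkLen w (p.append q) = walkLen w p + walkLen w q := by
  simp [walkLen, SimpleGraph.Walk.edges_append]

lemma walk_potential {V : Type*} {G : SimpleGraph V} (w : Sym2 V → ℝ) (φ : V → ℝ)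
    (h : ∀ x y, G.Adj x y → φ y - φ x ≤ w s(x, y)) :
    ∀ {a b : V} (p : G.Walk a b), φ b - φ a ≤ walkLen w p := by
  intro a b p
  induction p with
  | nil => simp [walkLen_nil]
  | cons ha p ih =>
    rw [walkLen_cons]
    have := h _ _ ha
    linarith

lemma walk_potential_strict {V : Type*} {G : SimpleGraph V} (w : Sym2 V → ℝ) (φ : V → ℝ)
    (e₀ : Sym2 V) (δ : ℝ)
    (h : ∀ x y, G.Adj x y → φ y - φ x ≤ w s(x, y))
    (h0 : ∀ x y, G.Adj x y → s(x, y) = e₀ → φ y - φ x + δ ≤ w s(x, y)) :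
    ∀ {a b : V} (p : G.Walk a b), e₀ ∈ p.edges → φ b - φ a + δ ≤ walkLen w p := by
  intro a b p
  induction p with
  | nil => simp
  | @cons a x b ha p ih =>
    intro he
    rw [SimpleGraph.Walk.edges_cons, List.mem_cons] at he
    rw [walkLen_cons]
    rcases he with he | he
    · have h1 := h0 _ _ ha he.symm
      have h2 := walk_potential w φ h p
      linarith
    · have h1 := h _ _ ha
      have h2 := ih he
      linarith

end Aux
section Aux2
variable {n : ℕ}

lemma castSucc_ne_succ (i : Fin n) : (i.castSucc : Fin (n+1)) ≠ i.succ := by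
  simp [Fin.ext_iff]

lemma botE_mem_edgeSet (i : Fin n) : botE n i ∈ (chainGraph n).edgeSet := by
  rw [chainGraph, edgeSet_fromEdgeSet]
  refine ⟨⟨i, Or.inl rfl⟩, ?_⟩
  simp [botE, Sym2.isDiag_iff_proj_eq, castSucc_ne_succ i]

lemma d1E_mem_edgeSet (i : Fin n) : d1E n i ∈ (chainGraph n).edgeSet := by
  rw [chainGraph, edgeSet_fromEdgeSet]
  refine ⟨⟨i, Or.inr (Or.inl rfl)⟩, ?_⟩
  simp [d1E, Sym2.isDiag_iff_proj_eq]

lemma d2E_mem_edgeSet (i : Fin n) : d2E n i ∈ (chainGraph n).edgeSet := by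
  rw [chainGraph, edgeSet_fromEdgeSet]
  refine ⟨⟨i, Or.inr (Or.inr rfl)⟩, ?_⟩
  simp [d2E, Sym2.isDiag_iff_proj_eq]

lemma botE_ne_d1E (i j : Fin n) : botE n i ≠ d1E n j := by
  simp [botE, d1E, Sym2.eq_iff]

lemma botE_ne_d2E (i j : Fin n) : botE n i ≠ d2E n j := by
  simp [botE, d2E, Sym2.eq_iff]

lemma d1E_ne_d2E (i j : Fin n) : d1E n i ≠ d2E n j := by
  intro h
  rw [d1E, d2E, Sym2.eq_iff] at h
  rcases h with ⟨h1, h2⟩ | ⟨h1, h2⟩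
  · exact absurd h2 (by simp)
  · have hij : i = j := Sum.inr.inj h2
    have h1' : (i : ℕ) = (j : ℕ) + 1 := by
      have := Sum.inl.inj h1
      simpa [Fin.ext_iff] using this
    subst hij
    omega

lemma d1E_inj {i j : Fin n} (h : d1E n i = d1E n j) : i = j := by
  simp only [d1E, Sym2.eq_iff] at h
  rcases h with ⟨h1, h2⟩ | ⟨h1, h2⟩ <;> simp_all

lemma d2E_inj {i j : Fin n} (h : d2E n i = d2E n j) : i = j := by
  simp only [d2E, Sym2.eq_iff] at h
  rcases h with ⟨h1, h2⟩ | ⟨h1, h2⟩ <;> simp_all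

/-- any edge of the chain graph containing `ω i` is `d1E i` or `d2E i`. -/
lemma edge_at_inr {e : Sym2 (CV n)} (he : e ∈ (chainGraph n).edgeSet) {i : Fin n}
    (hi : (Sum.inr i : CV n) ∈ e) : e = d1E n i ∨ e = d2E n i := by
  rw [chainGraph, edgeSet_fromEdgeSet] at he
  obtain ⟨⟨j, hj | hj | hj⟩, -⟩ := he <;> subst hj
  · simp [botE, Sym2.mem_iff] at hi
  · left
    simp only [d1E, Sym2.mem_iff] at hi
    rcases hi with h | h <;> simp_all [d1E]
  · right
    simp only [d2E, Sym2.mem_iff] at hi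
    rcases hi with h | h <;> simp_all [d2E]

/-- adjacency classification -/
lemma chain_adj {x y : CV n} (h : (chainGraph n).Adj x y) :
    ∃ i : Fin n, s(x, y) = botE n i ∨ s(x, y) = d1E n i ∨ s(x, y) = d2E n i := by
  rw [chainGraph, fromEdgeSet_adj] at h
  exact h.1

lemma adj_bot {k : ℕ} (hk : k < n) :
    (chainGraph n).Adj (Sum.inl ⟨k, by omega⟩) (Sum.inl ⟨k + 1, by omega⟩) := by
  rw [chainGraph, fromEdgeSet_adj]
  constructor
  · exact ⟨⟨k, hk⟩, Or.inl (by simp [botE, Fin.castSucc, Fin.succ, Fin.ext_iff])⟩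
  · simp [Fin.ext_iff]

end Aux2
section Paths
open SimpleGraph.Walk
variable {n : ℕ}

lemma walkLen_copy {V : Type*} {G : SimpleGraph V} (w : Sym2 V → ℝ) {a b a' b' : V}
    (p : G.Walk a b) (h1 : a = a') (h2 : b = b') :
    walkLen w (p.copy h1 h2) = walkLen w p := by
  simp [walkLen]

lemma walkLen_concat {V : Type*} {G : SimpleGraph V} (w : Sym2 V → ℝ) {a b c : V}
    (p : G.Walk a b) (h : G.Adj b c) :
    walkLen w (p.concat h) = walkLen w p + w s(b, c) := by
  simp [walkLen, edges_concat]

/-- The bottom walk from `u_k` to `u_n`, where `m = n - k` steps remain. -/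
def pathFromAux : (m : ℕ) → (k : Fin (n+1)) → (hk : (k : ℕ) + m = n) →
    (chainGraph n).Walk (Sum.inl k) (dst n)
  | 0, k, hk => Walk.nil.copy rfl (by
      rw [dst, show Fin.last n = k from Fin.ext (by simp [Fin.last]; omega)])
  | m + 1, k, hk =>
      Walk.cons (show (chainGraph n).Adj (Sum.inl k) (Sum.inl ⟨(k : ℕ) + 1, by omega⟩) from
          adj_bot (by omega))
        (pathFromAux m ⟨(k : ℕ) + 1, by omega⟩ (by show (k : ℕ) + 1 + m = n; omega))

lemma pathFromAux_support : ∀ (m : ℕ) (k : Fin (n+1)) (hk : (k : ℕ) + m = n)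
    (x : CV n), x ∈ (pathFromAux m k hk).support →
    ∃ j : Fin (n+1), n - m ≤ (j : ℕ) ∧ x = Sum.inl j
  | 0, k, hk, x, hx => by
    simp only [pathFromAux, support_copy, support_nil, List.mem_singleton] at hx
    exact ⟨k, by omega, hx⟩
  | m + 1, k, hk, x, hx => by
    simp only [pathFromAux, support_cons, List.mem_cons] at hx
    rcases hx with rfl | hx
    · exact ⟨k, by omega, rfl⟩
    · obtain ⟨j, hj, rfl⟩ := pathFromAux_support m _ _ x hx
      exact ⟨j, by omega, rfl⟩

lemma pathFromAux_isPath : ∀ (m : ℕ) (k : Fin (n+1)) (hk : (k : ℕ) + m = n),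
    (pathFromAux m k hk).IsPath
  | 0, k, hk => by simp [pathFromAux]
  | m + 1, k, hk => by
    rw [pathFromAux, cons_isPath_iff]
    refine ⟨pathFromAux_isPath m _ _, fun hx => ?_⟩
    obtain ⟨j, hj, hx⟩ := pathFromAux_support m _ _ _ hx
    obtain rfl : k = j := by exact Sum.inl.inj hx
    omega

lemma pathFromAux_edges : ∀ (m : ℕ) (k : Fin (n+1)) (hk : (k : ℕ) + m = n)
    (e : Sym2 (CV n)), e ∈ (pathFromAux m k hk).edges →
    ∃ j : Fin n, n - m ≤ (j : ℕ) ∧ e = botE n j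
  | 0, k, hk, e, he => by simp [pathFromAux] at he
  | m + 1, k, hk, e, he => by
    simp only [pathFromAux, edges_cons, List.mem_cons] at he
    rcases he with rfl | he
    · exact ⟨⟨(k : ℕ), by omega⟩, by show n - (m + 1) ≤ (k : ℕ); omega, by
        simp [botE, Fin.castSucc, Fin.succ, Fin.ext_iff]⟩
    · obtain ⟨j, hj, rfl⟩ := pathFromAux_edges m _ _ e he
      exact ⟨j, by omega, rfl⟩

lemma pathFromAux_walkLen (w : Sym2 (CV n) → ℝ) :
    ∀ (m : ℕ) (k : Fin (n+1)) (hk : (k : ℕ) + m = n),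
    walkLen w (pathFromAux m k hk) =
      ∑ j ∈ Finset.univ.filter (fun j : Fin n => n - m ≤ (j : ℕ)), w (botE n j)
  | 0, k, hk => by
    rw [pathFromAux, walkLen_copy, walkLen_nil, eq_comm]
    apply Finset.sum_eq_zero
    intro j hj
    simp only [Finset.mem_filter] at hj
    omega
  | m + 1, k, hk => by
    rw [pathFromAux, walkLen_cons, pathFromAux_walkLen w m]
    have hkn : (k : ℕ) < n := by omega
    have hins : Finset.univ.filter (fun j : Fin n => n - (m + 1) ≤ (j : ℕ)) =
        insert ⟨(k : ℕ), hkn⟩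
          (Finset.univ.filter (fun j : Fin n => n - m ≤ (j : ℕ))) := by
      ext j
      simp only [Finset.mem_filter, Finset.mem_insert, Finset.mem_univ, true_and, Fin.ext_iff]
      omega
    rw [hins, Finset.sum_insert (by simp; omega)]
    congr 1

end Paths
section Paths2
open SimpleGraph.Walk
variable {n : ℕ}

/-- The bottom walk from `u_0` to `u_m`. -/
def pathToAux : (m : ℕ) → (hm : m ≤ n) →
    (chainGraph n).Walk (Sum.inl ⟨0, by omega⟩) (Sum.inl ⟨m, by omega⟩)
  | 0, _ => Walk.nil
  | m + 1, hm => (pathToAux m (by omega)).concat (adj_bot (by omega))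

lemma pathToAux_support : ∀ (m : ℕ) (hm : m ≤ n) (x : CV n),
    x ∈ (pathToAux m hm).support → ∃ j : Fin (n+1), (j : ℕ) ≤ m ∧ x = Sum.inl j
  | 0, hm, x, hx => by
    simp only [pathToAux, support_nil, List.mem_singleton] at hx
    exact ⟨⟨0, by omega⟩, by simp, hx⟩
  | m + 1, hm, x, hx => by
    rw [pathToAux, support_concat, List.mem_append] at hx
    rcases hx with hx | hx
    · obtain ⟨j, hj, rfl⟩ := pathToAux_support m _ x hx
      exact ⟨j, by omega, rfl⟩
    · rw [List.mem_singleton] at hx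
      exact ⟨⟨m + 1, by omega⟩, by simp, hx⟩

lemma pathToAux_isPath : ∀ (m : ℕ) (hm : m ≤ n), (pathToAux m hm).IsPath
  | 0, hm => by simp [pathToAux]
  | m + 1, hm => by
    rw [pathToAux, isPath_def, support_concat,
      List.nodup_append]
    refine ⟨(pathToAux_isPath m (by omega)).support_nodup, by simp, ?_⟩
    intro x hx _ hx' rfl
    rw [List.mem_singleton] at hx'
    subst hx'
    obtain ⟨j, hj, hx⟩ := pathToAux_support m _ _ hx
    have hj' : (⟨m + 1, by omega⟩ : Fin (n+1)) = j := Sum.inl.inj hx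
    rw [← hj'] at hj
    simp at hj

lemma pathToAux_edges : ∀ (m : ℕ) (hm : m ≤ n) (e : Sym2 (CV n)),
    e ∈ (pathToAux m hm).edges → ∃ j : Fin n, (j : ℕ) < m ∧ e = botE n j
  | 0, hm, e, he => by simp [pathToAux] at he
  | m + 1, hm, e, he => by
    rw [pathToAux, edges_concat, List.concat_eq_append, List.mem_append] at he
    rcases he with he | he
    · obtain ⟨j, hj, rfl⟩ := pathToAux_edges m _ e he
      exact ⟨j, by omega, rfl⟩
    · rw [List.mem_singleton] at he
      refine ⟨⟨m, by omega⟩, by simp, ?_⟩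
      rw [he]
      rfl

lemma pathToAux_walkLen (w : Sym2 (CV n) → ℝ) : ∀ (m : ℕ) (hm : m ≤ n),
    walkLen w (pathToAux m hm) =
      ∑ j ∈ Finset.univ.filter (fun j : Fin n => (j : ℕ) < m), w (botE n j)
  | 0, hm => by
    rw [pathToAux, walkLen_nil, eq_comm]
    apply Finset.sum_eq_zero
    intro j hj
    simp at hj
  | m + 1, hm => by
    rw [pathToAux, walkLen_concat, pathToAux_walkLen w m]
    have hmn : m < n := by omega
    have hins : Finset.univ.filter (fun j : Fin n => (j : ℕ) < m + 1) =
        insert ⟨m, hmn⟩ (Finset.univ.filter (fun j : Fin n => (j : ℕ) < m)) := by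
      ext j
      simp only [Finset.mem_filter, Finset.mem_insert, Finset.mem_univ, true_and, Fin.ext_iff]
      omega
    rw [hins, Finset.sum_insert (by simp)]
    rw [add_comm]
    congr 1

end Paths2
section Pot
variable {n : ℕ}

/-- Potential function for shortest-path lower bounds. -/
noncomputable def pot (w' : Sym2 (CV n) → ℝ) : CV n → ℝ
  | Sum.inl k => ∑ j ∈ Finset.univ.filter (fun j : Fin n => (j : ℕ) < (k : ℕ)), w' (botE n j)
  | Sum.inr i => (∑ j ∈ Finset.univ.filter (fun j : Fin n => (j : ℕ) < (i : ℕ)), w' (botE n j)) + 1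

lemma pot_inl_castSucc (w' : Sym2 (CV n) → ℝ) (i : Fin n) :
    pot w' (Sum.inl i.castSucc) =
      ∑ j ∈ Finset.univ.filter (fun j : Fin n => (j : ℕ) < (i : ℕ)), w' (botE n j) := by
  simp [pot]

lemma pot_inl_succ (w' : Sym2 (CV n) → ℝ) (i : Fin n) :
    pot w' (Sum.inl i.succ) = pot w' (Sum.inl i.castSucc) + w' (botE n i) := by
  rw [pot_inl_castSucc]
  show ∑ j ∈ Finset.univ.filter (fun j : Fin n => (j : ℕ) < ((i.succ : Fin (n+1)) : ℕ)),
      w' (botE n j) = _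
  have h1 : ((i.succ : Fin (n+1)) : ℕ) = (i : ℕ) + 1 := by simp
  rw [h1]
  have hins : Finset.univ.filter (fun j : Fin n => (j : ℕ) < (i : ℕ) + 1) =
      insert i (Finset.univ.filter (fun j : Fin n => (j : ℕ) < (i : ℕ))) := by
    ext j
    simp only [Finset.mem_filter, Finset.mem_insert, Finset.mem_univ, true_and, Fin.ext_iff]
    omega
  rw [hins, Finset.sum_insert (by simp)]
  ring

lemma pot_inr (w' : Sym2 (CV n) → ℝ) (i : Fin n) :
    pot w' (Sum.inr i) = pot w' (Sum.inl i.castSucc) + 1 := by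
  rw [pot_inl_castSucc]; simp [pot]

lemma pot_src (w' : Sym2 (CV n) → ℝ) : pot w' (src n) = 0 := by
  show pot w' (Sum.inl 0) = 0
  simp only [pot]
  apply Finset.sum_eq_zero
  intro j hj
  simp at hj

lemma pot_dst (w' : Sym2 (CV n) → ℝ) : pot w' (dst n) = ∑ j : Fin n, w' (botE n j) := by
  show pot w' (Sum.inl (Fin.last n)) = _
  simp only [pot]
  congr 1
  ext j
  simp [j.isLt]

section Bounds
variable (η : Fin n → ℝ) (S : Finset (Fin n)) (w' : Sym2 (CV n) → ℝ)
  (hη : ∀ i, 0 < η i)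
  (hw'bot : ∀ i, w' (botE n i) = if i ∈ S then 1 + η i else 1)
  (hw'd1 : ∀ i, w' (d1E n i) = 1) (hw'd2 : ∀ i, w' (d2E n i) = η i)

include hη hw'bot in
lemma w'bot_ge (i : Fin n) : 1 ≤ w' (botE n i) := by
  rw [hw'bot]
  split
  · have := hη i; linarith
  · exact le_refl 1

include hη hw'bot in
lemma w'bot_le (i : Fin n) : w' (botE n i) ≤ 1 + η i := by
  rw [hw'bot]
  split
  · exact le_refl _
  · have := hη i; linarith

include hη hw'bot hw'd1 hw'd2 in
lemma chain_pot_le :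
    ∀ x y : CV n, (chainGraph n).Adj x y → pot w' y - pot w' x ≤ w' s(x, y) := by
  intro x y hxy
  obtain ⟨i, h | h | h⟩ := chain_adj hxy
  · rw [h]
    rw [botE, Sym2.eq_iff] at h
    have hb1 := w'bot_ge η S w' hη hw'bot i
    rcases h with ⟨rfl, rfl⟩ | ⟨rfl, rfl⟩ <;>
      rw [pot_inl_succ] <;> linarith
  · rw [h]
    rw [d1E, Sym2.eq_iff] at h
    rw [hw'd1]
    rcases h with ⟨rfl, rfl⟩ | ⟨rfl, rfl⟩ <;> rw [pot_inr] <;> linarith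
  · rw [h]
    rw [d2E, Sym2.eq_iff] at h
    rw [hw'd2]
    have hb1 := w'bot_ge η S w' hη hw'bot i
    have hb2 := w'bot_le η S w' hη hw'bot i
    rcases h with ⟨rfl, rfl⟩ | ⟨rfl, rfl⟩ <;>
      rw [pot_inl_succ, pot_inr] <;> linarith

include hw'bot hw'd2 in
lemma chain_pot_strict (i : Fin n) (hiS : i ∉ S) :
    ∀ x y : CV n, (chainGraph n).Adj x y → s(x, y) = d2E n i →
      pot w' y - pot w' x + η i ≤ w' s(x, y) := by
  intro x y hxy h
  rw [h, hw'd2]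
  have hb : w' (botE n i) = 1 := by rw [hw'bot]; simp [hiS]
  rw [d2E, Sym2.eq_iff] at h
  rcases h with ⟨rfl, rfl⟩ | ⟨rfl, rfl⟩ <;>
    rw [pot_inl_succ, pot_inr] <;> rw [hb] <;> linarith

end Bounds
end Pot
section Through
open SimpleGraph.Walk
variable {n : ℕ}

lemma path_through_inr {E' : Set (Sym2 (CV n))}
    {q : ((chainGraph n).deleteEdges E').Walk (src n) (dst n)} (hq : q.IsPath)
    {i : Fin n} (hi : (Sum.inr i : CV n) ∈ q.support) :
    d1E n i ∈ q.edges ∧ d2E n i ∈ q.edges := by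
  classical
  set q1 := q.takeUntil _ hi with hq1
  set q2 := q.dropUntil _ hi with hq2
  have hspec : q1.append q2 = q := q.take_spec hi
  -- q1 reversed is a cons
  have hne1 : (Sum.inr i : CV n) ≠ src n := by simp [src]
  have hne2 : (Sum.inr i : CV n) ≠ dst n := by simp [dst]
  obtain ⟨u, hadj1, r1, hr1⟩ := (not_nil_iff.mp (not_nil_of_ne hne1 (p := q1.reverse)))
  obtain ⟨v, hadj2, r2, hr2⟩ := (not_nil_iff.mp (not_nil_of_ne hne2 (p := q2)))
  have he1 : s(Sum.inr i, u) ∈ q1.edges := by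
    rw [← List.mem_reverse, ← edges_reverse, hr1]
    simp
  have he2 : s(Sum.inr i, v) ∈ q2.edges := by
    rw [hr2]; simp
  have hnodup : (q1.edges ++ q2.edges).Nodup := by
    rw [← edges_append, hspec]
    exact hq.edges_nodup
  have hdisj : q1.edges.Disjoint q2.edges := List.disjoint_of_nodup_append hnodup
  have hne : s(Sum.inr i, u) ≠ s(Sum.inr i, v) := by
    intro h
    exact hdisj he1 (h ▸ he2)
  have hqe1 : s(Sum.inr i, u) ∈ q.edges := by
    rw [← hspec, edges_append, List.mem_append]; exact Or.inl he1
  have hqe2 : s(Sum.inr i, v) ∈ q.edges := by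
    rw [← hspec, edges_append, List.mem_append]; exact Or.inr he2
  have hcl : ∀ x : CV n, s(Sum.inr i, x) ∈ q.edges →
      s(Sum.inr i, x) = d1E n i ∨ s(Sum.inr i, x) = d2E n i := by
    intro x hx
    have hmem : s(Sum.inr i, x) ∈ (chainGraph n).edgeSet := by
      have := q.edges_subset_edgeSet hx
      rw [edgeSet_deleteEdges] at this
      exact this.1
    exact edge_at_inr hmem (Sym2.mem_mk_left _ _)
  rcases hcl u hqe1 with h1 | h1 <;> rcases hcl v hqe2 with h2 | h2
  · exact absurd (h1.trans h2.symm) hne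
  · exact ⟨h1 ▸ hqe1, h2 ▸ hqe2⟩
  · exact ⟨h2 ▸ hqe2, h1 ▸ hqe1⟩
  · exact absurd (h1.trans h2.symm) hne

lemma edge_not_deleted {E' : Set (Sym2 (CV n))} {a b : CV n}
    {q : ((chainGraph n).deleteEdges E').Walk a b}
    {e : Sym2 (CV n)} (he : e ∈ q.edges) : e ∉ E' := by
  have := q.edges_subset_edgeSet he
  rw [edgeSet_deleteEdges] at this
  exact this.2

end Through
section Detour
open SimpleGraph.Walk
variable {n : ℕ}

lemma adj_d1 (i : Fin n) : (chainGraph n).Adj (Sum.inl i.castSucc) (Sum.inr i) := by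
  rw [chainGraph, fromEdgeSet_adj]
  exact ⟨⟨i, Or.inr (Or.inl rfl)⟩, by simp⟩

lemma adj_d2 (i : Fin n) : (chainGraph n).Adj (Sum.inr i) (Sum.inl i.succ) := by
  rw [chainGraph, fromEdgeSet_adj]
  exact ⟨⟨i, Or.inr (Or.inr rfl)⟩, by simp⟩

/-- The walk that follows the bottom path but detours through `ω_i`. -/
def detourWalk (i : Fin n) : (chainGraph n).Walk (src n) (dst n) :=
  ((pathToAux (i : ℕ) (by omega)).copy
      (show _ = src n from congrArg Sum.inl (Fin.ext (by simp)))
      (congrArg Sum.inl (Fin.ext (by simp)) : _ = Sum.inl i.castSucc)).append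
    (Walk.cons (adj_d1 i) (Walk.cons (adj_d2 i)
      (pathFromAux (n - ((i : ℕ) + 1)) i.succ (by simp [Fin.succ]))))

lemma detourWalk_support (i : Fin n) : (Sum.inr i : CV n) ∈ (detourWalk i).support := by
  rw [detourWalk, mem_support_append_iff]
  right
  simp

lemma detourWalk_edges (i : Fin n) {e : Sym2 (CV n)} (he : e ∈ (detourWalk i).edges) :
    e = d1E n i ∨ e = d2E n i ∨ ∃ j : Fin n, e = botE n j := by
  rw [detourWalk, edges_append, List.mem_append] at he
  rcases he with he | he
  · rw [edges_copy] at he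
    obtain ⟨j, -, rfl⟩ := pathToAux_edges _ _ _ he
    exact Or.inr (Or.inr ⟨j, rfl⟩)
  · rw [edges_cons, edges_cons] at he
    simp only [List.mem_cons] at he
    rcases he with he | he | he
    · exact Or.inl he
    · exact Or.inr (Or.inl he)
    · obtain ⟨j, -, rfl⟩ := pathFromAux_edges _ _ _ _ he
      exact Or.inr (Or.inr ⟨j, rfl⟩)

lemma detourWalk_isPath (i : Fin n) : (detourWalk i).IsPath := by
  rw [detourWalk, isPath_def, support_append, List.nodup_append]
  refine ⟨by rw [support_copy]; exact (pathToAux_isPath _ _).support_nodup, ?_, ?_⟩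
  · rw [support_cons, support_cons]
    simp only [List.tail_cons, List.nodup_cons]
    constructor
    · intro hmem
      obtain ⟨j, -, hj⟩ := pathFromAux_support _ _ _ _ hmem
      exact absurd hj (by simp)
    · exact (pathFromAux_isPath _ _ _).support_nodup
  · intro x hx _ hx' rfl
    rw [support_copy] at hx
    obtain ⟨j, hj, rfl⟩ := pathToAux_support _ _ _ hx
    rw [support_cons, support_cons] at hx'
    simp only [List.tail_cons, List.mem_cons] at hx'
    rcases hx' with h | h
    · exact absurd h (by simp)
    · obtain ⟨j', hj', hx'⟩ := pathFromAux_support _ _ _ _ h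
      obtain rfl := Sum.inl.inj hx'
      simp [Fin.succ] at hj'
      omega

lemma detourWalk_walkLen (w' : Sym2 (CV n) → ℝ) (i : Fin n) :
    walkLen w' (detourWalk i) =
      (∑ j ∈ Finset.univ.filter (fun j : Fin n => (j : ℕ) < (i : ℕ)), w' (botE n j))
      + (w' (d1E n i) + w' (d2E n i))
      + ∑ j ∈ Finset.univ.filter (fun j : Fin n => (i : ℕ) + 1 ≤ (j : ℕ)), w' (botE n j) := by
  rw [detourWalk, walkLen_append, walkLen_copy, pathToAux_walkLen, walkLen_cons, walkLen_cons,
    pathFromAux_walkLen]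
  have h1 : n - (n - ((i : ℕ) + 1)) = (i : ℕ) + 1 := by omega
  rw [h1]
  have h2 : s(Sum.inl i.castSucc, Sum.inr i) = d1E n i := rfl
  have h3 : s(Sum.inr i, Sum.inl i.succ) = d2E n i := rfl
  rw [h2, h3]
  ring

/-- splitting the total bottom sum at `i`. -/
lemma sum_bot_split (w' : Sym2 (CV n) → ℝ) (i : Fin n) :
    ∑ j : Fin n, w' (botE n j) =
      (∑ j ∈ Finset.univ.filter (fun j : Fin n => (j : ℕ) < (i : ℕ)), w' (botE n j))
      + w' (botE n i)
      + ∑ j ∈ Finset.univ.filter (fun j : Fin n => (i : ℕ) + 1 ≤ (j : ℕ)), w' (botE n j) := by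
  classical
  rw [← Finset.sum_filter_add_sum_filter_not Finset.univ (fun j : Fin n => (j : ℕ) < (i : ℕ))
    (fun j => w' (botE n j))]
  have h : Finset.univ.filter (fun j : Fin n => ¬ (j : ℕ) < (i : ℕ)) =
      insert i (Finset.univ.filter (fun j : Fin n => (i : ℕ) + 1 ≤ (j : ℕ))) := by
    ext j
    simp only [Finset.mem_filter, Finset.mem_insert, Finset.mem_univ, true_and, Fin.ext_iff]
    omega
  rw [h, Finset.sum_insert (by simp)]
  ring

end Detour
/-- In the chain gadget (bottom edges of true weight 1, detour through `ω_i` of true length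
`1 + η_i`, detour edges of removal cost `ν_i`), publishing weights that raise the bottom
edge `{u_{i-1},u_i}` from `1` to `1 + η_i` exactly for `i ∈ S` makes the minimum attack
cost equal to `∑_{i∈S} ν_i`, and makes the shortest published `s`–`t` distance exactly
`n + ∑_{i∈S} η_i` (an increase of exactly `∑_{i∈S} η_i`). -/
theorem stmt18 (n : ℕ) (η ν : Fin n → ℝ) (hη : ∀ i, 0 < η i) (hν : ∀ i, 0 < ν i)
    (w w' c : Sym2 (CV n) → ℝ)
    (hwbot : ∀ i, w (botE n i) = 1) (hwd1 : ∀ i, w (d1E n i) = 1)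
    (hwd2 : ∀ i, w (d2E n i) = η i)
    (hc1 : ∀ i, c (d1E n i) = ν i) (hc2 : ∀ i, c (d2E n i) = ν i)
    (S : Finset (Fin n))
    (hw'bot : ∀ i, w' (botE n i) = if i ∈ S then 1 + η i else 1)
    (hw'd1 : ∀ i, w' (d1E n i) = 1) (hw'd2 : ∀ i, w' (d2E n i) = η i) :
    ((∃ E', IsChainAttack n w' E' ∧ ∑ e ∈ E', c e = ∑ i ∈ S, ν i) ∧
      ∀ E', IsChainAttack n w' E' → ∑ i ∈ S, ν i ≤ ∑ e ∈ E', c e) ∧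
    ((∃ q : (chainGraph n).Walk (src n) (dst n), q.IsPath ∧
        walkLen w' q = n + ∑ i ∈ S, η i) ∧
      ∀ q : (chainGraph n).Walk (src n) (dst n), q.IsPath →
        n + ∑ i ∈ S, η i ≤ walkLen w' q) := by
  classical
  -- total bottom sum
  have hsum : ∑ j : Fin n, w' (botE n j) = n + ∑ i ∈ S, η i := by
    have h1 : ∀ j : Fin n, w' (botE n j) = 1 + (if j ∈ S then η j else 0) := by
      intro j; rw [hw'bot]; split <;> simp
    rw [Finset.sum_congr rfl (fun j _ => h1 j), Finset.sum_add_distrib]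
    congr 1
    · simp
    · rw [Finset.sum_ite_mem, Finset.univ_inter]
  have hpotle : ∀ x y : CV n, (chainGraph n).Adj x y → pot w' y - pot w' x ≤ w' s(x, y) :=
    chain_pot_le η S w' hη hw'bot hw'd1 hw'd2
  -- every attack must cut each detour with i ∈ S
  have hneed : ∀ E' : Finset (Sym2 (CV n)), IsChainAttack n w' E' →
      ∀ i ∈ S, d1E n i ∈ E' ∨ d2E n i ∈ E' := by
    rintro E' ⟨hsub, hb, hmain⟩ i hiS
    by_contra hcon
    push_neg at hcon
    obtain ⟨hd1, hd2⟩ := hcon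
    have htr : ∀ e ∈ (detourWalk i).edges,
        e ∈ ((chainGraph n).deleteEdges ↑E').edgeSet := by
      intro e he
      rw [edgeSet_deleteEdges]
      rcases detourWalk_edges i he with rfl | rfl | ⟨j, rfl⟩
      · exact ⟨d1E_mem_edgeSet i, hd1⟩
      · exact ⟨d2E_mem_edgeSet i, hd2⟩
      · exact ⟨botE_mem_edgeSet j, hb j⟩
    set q := (detourWalk i).transfer _ htr with hq
    have hlen : walkLen w' q = walkLen w' (detourWalk i) := by
      simp [walkLen, hq, SimpleGraph.Walk.edges_transfer]
    have := hmain q ((detourWalk_isPath i).transfer htr)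
      ⟨i, by rw [hq, SimpleGraph.Walk.support_transfer]; exact detourWalk_support i⟩
    rw [hlen, detourWalk_walkLen, hw'd1, hw'd2, sum_bot_split w' i, hw'bot] at this
    simp only [hiS, if_true] at this
    linarith
  refine ⟨⟨⟨S.image (d1E n), ⟨?_, ?_, ?_⟩, ?_⟩, ?_⟩, ⟨?_, ?_⟩⟩
  · -- attack edges lie in the graph
    intro e he
    simp only [Finset.coe_image, Set.mem_image, Finset.mem_coe] at he
    obtain ⟨i, -, rfl⟩ := he
    exact d1E_mem_edgeSet i
  · -- no bottom edge removed
    intro i hmem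
    obtain ⟨j, -, hj⟩ := Finset.mem_image.mp hmem
    exact botE_ne_d1E i j hj.symm
  · -- all detour paths strictly longer
    rintro q hqp ⟨i, hi⟩
    obtain ⟨hd1, hd2⟩ := path_through_inr hqp hi
    have hiS : i ∉ S := by
      intro h
      exact edge_not_deleted hd1
        (by exact_mod_cast Finset.mem_image_of_mem (d1E n) h)
    have hAdj : ∀ x y : CV n,
        ((chainGraph n).deleteEdges ↑(S.image (d1E n))).Adj x y → (chainGraph n).Adj x y :=
      fun x y h => (SimpleGraph.deleteEdges_le _) h
    have hgain := walk_potential_strict w' (pot w') (d2E n i) (η i)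
      (fun x y h => hpotle x y (hAdj x y h))
      (fun x y h he => chain_pot_strict η S w' hw'bot hw'd2 i hiS x y (hAdj x y h) he)
      q hd2
    rw [pot_dst, pot_src] at hgain
    have := hη i
    linarith
  · -- cost of this attack
    rw [Finset.sum_image (fun i _ j _ h => d1E_inj h)]
    exact Finset.sum_congr rfl fun i _ => hc1 i
  · -- lower bound on attack cost
    intro E' hatt
    have hneedE := hneed E' hatt
    obtain ⟨hsub, hb, -⟩ := hatt
    set f : Fin n → Sym2 (CV n) := fun i => if d1E n i ∈ E' then d1E n i else d2E n i with hf
    have hfE : ∀ i ∈ S, f i ∈ E' := by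
      intro i hi
      rcases hneedE i hi with h | h
      · simp [hf, h]
      · by_cases h1 : d1E n i ∈ E' <;> simp [hf, h1, h]
    have hfc : ∀ i, c (f i) = ν i := by
      intro i; rw [hf]; dsimp only; split
      · exact hc1 i
      · exact hc2 i
    have hinj : ∀ i ∈ S, ∀ j ∈ S, f i = f j → i = j := by
      intro i _ j _ hij
      rw [hf] at hij
      dsimp only at hij
      split at hij <;> split at hij
      · exact d1E_inj hij
      · exact absurd hij (d1E_ne_d2E i j)
      · exact absurd hij.symm (d1E_ne_d2E j i)
      · exact d2E_inj hij
    calc ∑ i ∈ S, ν i = ∑ i ∈ S, c (f i) := Finset.sum_congr rfl fun i _ => (hfc i).symm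
      _ = ∑ e ∈ S.image f, c e := (Finset.sum_image hinj).symm
      _ ≤ ∑ e ∈ E', c e := by
        apply Finset.sum_le_sum_of_subset_of_nonneg
        · intro e he
          obtain ⟨i, hi, rfl⟩ := Finset.mem_image.mp he
          exact hfE i hi
        · intro e heE' _
          have hmem : e ∈ (chainGraph n).edgeSet := hsub heE'
          rw [chainGraph, edgeSet_fromEdgeSet] at hmem
          obtain ⟨⟨j, hj | hj | hj⟩, -⟩ := hmem
          · exact absurd (hj ▸ heE') (hb j)
          · rw [hj, hc1]; exact (hν j).le
          · rw [hj, hc2]; exact (hν j).le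
  · -- the bottom path achieves the distance
    refine ⟨(pathFromAux n ⟨0, by omega⟩ (by show (0 : ℕ) + n = n; omega)).copy
      (congrArg Sum.inl (Fin.ext (by simp))) rfl, ?_, ?_⟩
    · apply (SimpleGraph.Walk.isPath_copy ..).mpr
      exact pathFromAux_isPath _ _ _
    · refine (walkLen_copy w' _ _ _).trans ?_
      rw [pathFromAux_walkLen]
      rw [← hsum]
      apply Finset.sum_congr _ fun j _ => rfl
      ext j
      simp
  · -- lower bound on shortest distance
    intro q hq
    have := walk_potential w' (pot w') hpotle q
    rw [pot_dst, pot_src] at this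
    linarith [hsum]
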